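/- Define ψ : ℝ → ℝ by ψ(x) := 2 arctan(tanh(x)) and β : ℝ → ℝ by β(x) := 4 sech(2x) = 8/(e^{2x} + e^{−2x}). Then the functions u₊(z,x) := e^{iψ(x)} and u₋(z,x) := e^{−iψ(x)}, which do not depend on z, are solutions of the one-dimensional quadratic nonlinear Schrödinger equation i ∂_z u + ∂²_{xx} u + β(x) u² = 0 on (0,∞) × ℝ; moreover |u₊(z,x)| = |u₋(z,x)| = 1 for all (z,x) ∈ (0,∞) × ℝ, while their initial conditions f₊(x) = e^{iψ(x)} and f₋(x) = e^{−iψ(x)} are distinct functions. -/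

import Mathlib

noncomputable section

open Set

/-- `ψ(x) = 2 arctan (tanh x)`. -/
def psiGordon (x : ℝ) : ℝ := 2 * Real.arctan (Real.tanh x)

/-- `β(x) = 4 sech (2x) = 8 / (e^{2x} + e^{-2x})`. -/
def betaGordon (x : ℝ) : ℝ := 8 / (Real.exp (2 * x) + Real.exp (-(2 * x)))

/-- `u₊(z,x) = e^{iψ(x)}` (independent of `z`). -/
def uplusGordon (_z : ℝ) (x : ℝ) : ℂ := Complex.exp (Complex.I * (psiGordon x : ℂ))

/-- `u₋(z,x) = e^{-iψ(x)}` (independent of `z`). -/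
def uminusGordon (_z : ℝ) (x : ℝ) : ℂ := Complex.exp (-(Complex.I * (psiGordon x : ℂ)))

lemma cos_psiGordon (x : ℝ) : Real.cos (psiGordon x) = 1 / Real.cosh (2 * x) := by
  have hc : Real.cosh x ≠ 0 := (Real.cosh_pos x).ne'
  have hc2 : Real.cosh (2 * x) ≠ 0 := (Real.cosh_pos _).ne'
  have hpos : (0:ℝ) < 1 + Real.tanh x ^ 2 := by positivity
  rw [psiGordon, Real.cos_two_mul, Real.cos_arctan, div_pow, one_pow, Real.sq_sqrt hpos.le,
    Real.tanh_eq_sinh_div_cosh, Real.cosh_two_mul]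
  have h1 : 1 + (Real.sinh x / Real.cosh x) ^ 2 ≠ 0 := by
    have : (0:ℝ) < 1 + (Real.sinh x / Real.cosh x) ^ 2 := by positivity
    exact this.ne'
  field_simp
  nlinarith [Real.cosh_sq x]

lemma sin_psiGordon (x : ℝ) :
    Real.sin (psiGordon x) = Real.sinh (2 * x) / Real.cosh (2 * x) := by
  have hc : Real.cosh x ≠ 0 := (Real.cosh_pos x).ne'
  have hc2 : Real.cosh (2 * x) ≠ 0 := (Real.cosh_pos _).ne'
  have hpos : (0:ℝ) ≤ 1 + Real.tanh x ^ 2 := by positivity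
  rw [psiGordon, Real.sin_two_mul, Real.sin_arctan, Real.cos_arctan,
    mul_assoc, div_mul_div_comm, mul_one, Real.mul_self_sqrt hpos,
    Real.tanh_eq_sinh_div_cosh, Real.sinh_two_mul, Real.cosh_two_mul]
  have h1 : 1 + (Real.sinh x / Real.cosh x) ^ 2 ≠ 0 := by
    have : (0:ℝ) < 1 + (Real.sinh x / Real.cosh x) ^ 2 := by positivity
    exact this.ne'
  field_simp

lemma coshC_ne (x : ℝ) : Complex.cosh (2 * (x:ℂ)) ≠ 0 := by
  have : Complex.cosh (2 * (x:ℂ)) = ((Real.cosh (2*x) : ℝ) : ℂ) := by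
    push_cast [Complex.ofReal_cosh]; ring_nf
  rw [this]
  exact_mod_cast (Real.cosh_pos (2*x)).ne'

lemma uplus_eq (z x : ℝ) :
    uplusGordon z x
      = (1 + 1 * Complex.I * Complex.sinh (2 * (x:ℂ))) / Complex.cosh (2 * (x:ℂ)) := by
  have hc2 : Real.cosh (2 * x) ≠ 0 := (Real.cosh_pos _).ne'
  rw [uplusGordon, mul_comm, Complex.exp_mul_I]
  rw [show Complex.cos (psiGordon x : ℂ) = ((Real.cos (psiGordon x) : ℝ) : ℂ) from
    (Complex.ofReal_cos _).symm,
    show Complex.sin (psiGordon x : ℂ) = ((Real.sin (psiGordon x) : ℝ) : ℂ) from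
    (Complex.ofReal_sin _).symm,
    cos_psiGordon, sin_psiGordon,
    show Complex.cosh (2 * (x:ℂ)) = ((Real.cosh (2*x) : ℝ) : ℂ) by
      push_cast [Complex.ofReal_cosh]; ring_nf,
    show Complex.sinh (2 * (x:ℂ)) = ((Real.sinh (2*x) : ℝ) : ℂ) by
      push_cast [Complex.ofReal_sinh]; ring_nf]
  push_cast
  field_simp

lemma uminus_eq (z x : ℝ) :
    uminusGordon z x
      = (1 + (-1) * Complex.I * Complex.sinh (2 * (x:ℂ))) / Complex.cosh (2 * (x:ℂ)) := by
  have hc2 : Real.cosh (2 * x) ≠ 0 := (Real.cosh_pos _).ne'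
  rw [uminusGordon, show -(Complex.I * (psiGordon x : ℂ)) = ((-psiGordon x : ℝ) : ℂ) * Complex.I
      by push_cast; ring, Complex.exp_mul_I]
  rw [show Complex.cos ((-psiGordon x : ℝ) : ℂ) = ((Real.cos (-psiGordon x) : ℝ) : ℂ) from
    (Complex.ofReal_cos _).symm,
    show Complex.sin ((-psiGordon x : ℝ) : ℂ) = ((Real.sin (-psiGordon x) : ℝ) : ℂ) from
    (Complex.ofReal_sin _).symm,
    Real.cos_neg, Real.sin_neg, cos_psiGordon, sin_psiGordon,
    show Complex.cosh (2 * (x:ℂ)) = ((Real.cosh (2*x) : ℝ) : ℂ) by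
      push_cast [Complex.ofReal_cosh]; ring_nf,
    show Complex.sinh (2 * (x:ℂ)) = ((Real.sinh (2*x) : ℝ) : ℂ) by
      push_cast [Complex.ofReal_sinh]; ring_nf]
  push_cast
  field_simp

lemma hasDerivSinh (x : ℝ) :
    HasDerivAt (fun t : ℝ => Complex.sinh (2 * (t:ℂ))) (2 * Complex.cosh (2 * (x:ℂ))) x := by
  have hd2 : HasDerivAt (fun w : ℂ => 2 * w) 2 (x:ℂ) := by
    simpa using (hasDerivAt_id (x:ℂ)).const_mul 2
  have h := (Complex.hasDerivAt_sinh (2 * (x:ℂ))).comp (x:ℂ) hd2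
  simpa [Function.comp, mul_comm] using h.comp_ofReal

lemma hasDerivCosh (x : ℝ) :
    HasDerivAt (fun t : ℝ => Complex.cosh (2 * (t:ℂ))) (2 * Complex.sinh (2 * (x:ℂ))) x := by
  have hd2 : HasDerivAt (fun w : ℂ => 2 * w) 2 (x:ℂ) := by
    simpa using (hasDerivAt_id (x:ℂ)).const_mul 2
  have h := (Complex.hasDerivAt_cosh (2 * (x:ℂ))).comp (x:ℂ) hd2
  simpa [Function.comp, mul_comm] using h.comp_ofReal

lemma hasDerivU1 (s : ℂ) (x : ℝ) :
    HasDerivAt (fun t : ℝ => (1 + s * Complex.I * Complex.sinh (2 * (t:ℂ))) / Complex.cosh (2 * (t:ℂ)))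
      ((2 * s * Complex.I - 2 * Complex.sinh (2 * (x:ℂ))) / Complex.cosh (2 * (x:ℂ)) ^ 2) x := by
  have hn : HasDerivAt (fun t : ℝ => 1 + s * Complex.I * Complex.sinh (2 * (t:ℂ)))
      (s * Complex.I * (2 * Complex.cosh (2 * (x:ℂ)))) x :=
    ((hasDerivSinh x).const_mul (s * Complex.I)).const_add 1
  have h := hn.div (hasDerivCosh x) (coshC_ne x)
  refine h.congr_deriv (Eq.symm ?_)
  have hC := coshC_ne x
  have key := Complex.cosh_sq_sub_sinh_sq (2 * (x:ℂ))
  rw [div_eq_div_iff (pow_ne_zero 2 hC) (pow_ne_zero 2 hC)]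
  linear_combination (-2 * s * Complex.I * Complex.cosh (2*(x:ℂ))^2) * key

lemma hasDerivU2 (s : ℂ) (x : ℝ) :
    HasDerivAt (fun t : ℝ =>
        (2 * s * Complex.I - 2 * Complex.sinh (2 * (t:ℂ))) / Complex.cosh (2 * (t:ℂ)) ^ 2)
      ((-4 * Complex.cosh (2 * (x:ℂ)) ^ 2 - 8 * s * Complex.I * Complex.sinh (2 * (x:ℂ))
          + 8 * Complex.sinh (2 * (x:ℂ)) ^ 2) / Complex.cosh (2 * (x:ℂ)) ^ 3) x := by
  have hn : HasDerivAt (fun t : ℝ => 2 * s * Complex.I - 2 * Complex.sinh (2 * (t:ℂ)))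
      (-(2 * (2 * Complex.cosh (2 * (x:ℂ))))) x :=
    ((hasDerivSinh x).const_mul 2).const_sub (2 * s * Complex.I)
  have hd : HasDerivAt (fun t : ℝ => Complex.cosh (2 * (t:ℂ)) ^ 2)
      (2 * Complex.sinh (2 * (x:ℂ)) * Complex.cosh (2 * (x:ℂ))
        + Complex.cosh (2 * (x:ℂ)) * (2 * Complex.sinh (2 * (x:ℂ)))) x := by
    simp only [pow_two]; exact (hasDerivCosh x).mul (hasDerivCosh x)
  have h := hn.div hd (pow_ne_zero 2 (coshC_ne x))
  refine h.congr_deriv (Eq.symm ?_)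
  have hC := coshC_ne x
  rw [div_eq_div_iff (pow_ne_zero 3 hC) (pow_ne_zero 2 (pow_ne_zero 2 hC))]
  ring

theorem QNLS_nonuniqueness_one_dimensional :
    (∀ z ∈ Ioi (0 : ℝ), ∀ x : ℝ,
      Complex.I * deriv (fun t => uplusGordon t x) z
        + deriv (deriv (uplusGordon z)) x
        + (betaGordon x : ℂ) * (uplusGordon z x) ^ 2 = 0) ∧
    (∀ z ∈ Ioi (0 : ℝ), ∀ x : ℝ,
      Complex.I * deriv (fun t => uminusGordon t x) z
        + deriv (deriv (uminusGordon z)) x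
        + (betaGordon x : ℂ) * (uminusGordon z x) ^ 2 = 0) ∧
    (∀ z ∈ Ioi (0 : ℝ), ∀ x : ℝ,
      ‖uplusGordon z x‖ = 1 ∧ ‖uminusGordon z x‖ = 1) ∧
    (fun x : ℝ => uplusGordon 0 x) ≠ (fun x : ℝ => uminusGordon 0 x) := by
  have hbeta : ∀ x : ℝ, (betaGordon x : ℂ) = 4 / Complex.cosh (2 * (x:ℂ)) := by
    intro x
    have h2 : Real.exp (2*x) + Real.exp (-(2*x)) = 2 * Real.cosh (2*x) := by
      rw [Real.cosh_eq]; ring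
    have : betaGordon x = 4 / Real.cosh (2*x) := by
      rw [betaGordon, h2, div_eq_div_iff (by positivity) (Real.cosh_pos _).ne']
      ring
    rw [this]
    push_cast [Complex.ofReal_cosh]
    ring_nf
  have main : ∀ (s : ℂ), s ^ 2 = 1 → ∀ (u : ℝ → ℝ → ℂ),
      (∀ z x, u z x = (1 + s * Complex.I * Complex.sinh (2 * (x:ℂ))) / Complex.cosh (2 * (x:ℂ))) →
      ∀ z ∈ Ioi (0 : ℝ), ∀ x : ℝ,
        Complex.I * deriv (fun t => u t x) z + deriv (deriv (u z)) x
          + (betaGordon x : ℂ) * (u z x) ^ 2 = 0 := by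
    intro s hs u hu z _ x
    have hzc : (fun t => u t x) = fun _ : ℝ =>
        (1 + s * Complex.I * Complex.sinh (2 * (x:ℂ))) / Complex.cosh (2 * (x:ℂ)) := by
      funext t; exact hu t x
    have hd1 : deriv (u z) = fun y : ℝ =>
        (2 * s * Complex.I - 2 * Complex.sinh (2 * (y:ℂ))) / Complex.cosh (2 * (y:ℂ)) ^ 2 := by
      funext y
      have hzz : u z = fun y : ℝ =>
          (1 + s * Complex.I * Complex.sinh (2 * (y:ℂ))) / Complex.cosh (2 * (y:ℂ)) := by
        funext y; exact hu z y
      rw [hzz, (hasDerivU1 s y).deriv]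
    rw [hzc, deriv_const, mul_zero, zero_add, hd1, (hasDerivU2 s x).deriv, hu z x, hbeta x]
    have hC := coshC_ne x
    have key := Complex.cosh_sq_sub_sinh_sq (2 * (x:ℂ))
    set S := Complex.sinh (2 * (x:ℂ))
    set C := Complex.cosh (2 * (x:ℂ))
    have h0 : (-4 * C ^ 2 - 8 * s * Complex.I * S + 8 * S ^ 2) / C ^ 3
        + 4 / C * ((1 + s * Complex.I * S) / C) ^ 2
        = ((-4 * C ^ 2 - 8 * s * Complex.I * S + 8 * S ^ 2) + 4 * (1 + s * Complex.I * S) ^ 2)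
          / C ^ 3 := by
      field_simp
    rw [h0, div_eq_zero_iff]
    left
    linear_combination (-4 : ℂ) * key + (4 * Complex.I ^ 2 * S ^ 2) * hs + (4 * S ^ 2) * Complex.I_sq
  refine ⟨?_, ?_, ?_, ?_⟩
  · exact main 1 (by norm_num) uplusGordon (fun z x => uplus_eq z x)
  · exact main (-1) (by norm_num) uminusGordon (fun z x => uminus_eq z x)
  · intro z _ x
    constructor <;> simp [uplusGordon, uminusGordon, Complex.norm_exp]
  · intro h
    have h1 := congrFun h 1
    rw [uplus_eq, uminus_eq] at h1
    have hC := coshC_ne 1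
    rw [div_eq_div_iff hC hC] at h1
    have hsinh : Complex.sinh (2 * ((1:ℝ):ℂ)) = ((Real.sinh 2 : ℝ) : ℂ) := by
      push_cast [Complex.ofReal_sinh]; ring_nf
    have hs2 : Real.sinh 2 ≠ 0 := by
      rw [Ne, Real.sinh_eq_zero]; norm_num
    have hz : Complex.I * Complex.sinh (2 * ((1:ℝ):ℂ)) = 0 := by
      have h2 : 2 * (Complex.I * Complex.sinh (2 * ((1:ℝ):ℂ)))
          * Complex.cosh (2 * ((1:ℝ):ℂ)) = 0 := by
        linear_combination h1
      rcases mul_eq_zero.mp h2 with h3 | h3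
      · rcases mul_eq_zero.mp h3 with h4 | h4
        · norm_num at h4
        · exact h4
      · exact absurd h3 hC
    rw [hsinh] at hz
    rcases mul_eq_zero.mp hz with h4 | h4
    · exact Complex.I_ne_zero h4
    · exact hs2 (by exact_mod_cast h4)
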